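/- Let U : ℝ^d → ℝ be twice continuously differentiable and suppose: (i) for every a ∈ ℝ there exists a finite constant C_a such that ∫_{{U ≥ a}} e^{-U(x)/ε} dx ≤ C_a e^{-a/ε} for every ε > 0; (ii) there exist C > 0 and a compact set K ⊂ ℝ^d such that ‖∇²U(x)‖ ≤ C|∇U(x)|² for all x ∉ K, where ‖·‖ is the operator norm of the Hessian matrix; (iii) U(x) → ∞ as |x| → ∞; and (iv) the set of critical points of U (zeros of ∇U) is bounded. Then there exists ε₀ > 0 such that for every ε ∈ (0, ε₀), the functions |∇U|⁴ e^{-U/ε} and (ΔU)² e^{-U/ε} are Lebesgue integrable on ℝ^d; equivalently, |∇U|² and ΔU belong to L²(dπ_ε), where π_ε is the probability measure proportional to e^{-U/ε}dx. -/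

import Mathlib

open Filter Topology MeasureTheory InnerProductSpace Set

variable {E : Type*} [NormedAddCommGroup E] [InnerProductSpace ℝ E] [CompleteSpace E]

lemma aux_fderiv_inner (U : E → ℝ) (x y : E) : fderiv ℝ U x y = ⟪gradient U x, y⟫_ℝ := by
  rw [gradient, ← InnerProductSpace.toDual_apply_apply, LinearIsometryEquiv.apply_symm_apply]

lemma aux_grad_contDiff (U : E → ℝ) (hU : ContDiff ℝ 2 U) : ContDiff ℝ 1 (gradient U) := by
  have h1 : ContDiff ℝ 1 (fderiv ℝ U) := hU.fderiv_right (by norm_num)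
  exact ((InnerProductSpace.toDual ℝ E).symm.contDiff).comp h1

lemma aux_hasDerivAt_U (U : E → ℝ) (hU : ContDiff ℝ 2 U) (x w : E) (t : ℝ) :
    HasDerivAt (fun t : ℝ => U (x + t • w)) ⟪gradient U (x + t • w), w⟫_ℝ t := by
  have hσ : HasDerivAt (fun t : ℝ => x + t • w) w t := by
    simpa using (((hasDerivAt_id t).smul_const w).const_add x)
  have hdU : HasFDerivAt U (fderiv ℝ U (x + t • w)) (x + t • w) :=
    ((hU.differentiable (by norm_num)) _).hasFDerivAt
  have := hdU.comp_hasDerivAt t hσ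
  rwa [aux_fderiv_inner] at this

lemma aux_bootstrap (U : E → ℝ) (hU : ContDiff ℝ 2 U) (C R : ℝ) (hC : 0 < C)
    (hhess : ∀ z : E, R ≤ ‖z‖ → ‖fderiv ℝ (gradient U) z‖ ≤ C * ‖gradient U z‖ ^ 2)
    (x : E) (hx : gradient U x ≠ 0) (w : E)
    (hw : w = -(8 * C * ‖gradient U x‖ ^ 2)⁻¹ • gradient U x)
    (s₁ : ℝ) (hs₁ : s₁ ∈ Icc (0:ℝ) 1)
    (hseg : ∀ t ∈ Icc (0:ℝ) s₁, R ≤ ‖x + t • w‖) :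
    ∀ t ∈ Icc (0:ℝ) s₁,
      ‖gradient U (x + t • w) - gradient U x‖ ≤ 9/32 * ‖gradient U x‖ * t := by
  set g0 := ‖gradient U x‖ with hg0def
  have hg0 : 0 < g0 := norm_pos_iff.mpr hx
  have hwn : ‖w‖ = (8 * C * g0)⁻¹ := by
    rw [hw, norm_smul, norm_neg, norm_inv, Real.norm_eq_abs, abs_of_pos (by positivity)]
    rw [← hg0def]
    field_simp
  set F : ℝ → ℝ := fun t => ‖gradient U (x + t • w) - gradient U x‖ with hFdef
  have hFcont : Continuous F := by
    apply Continuous.norm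
    exact ((aux_grad_contDiff U hU).continuous.comp (by continuity)).sub continuous_const
  -- the MVT step : if the crude bound holds on [0,s], we get the refined bound on [0,s]
  have hMVT : ∀ s ∈ Icc (0:ℝ) s₁, (∀ t ∈ Icc (0:ℝ) s, F t ≤ g0 / 2) →
      ∀ t ∈ Icc (0:ℝ) s, F t ≤ 9/32 * g0 * t := by
    intro s hs hcrude t ht
    have hmemseg : ∀ z ∈ segment ℝ x (x + t • w), ∃ τ ∈ Icc (0:ℝ) t, z = x + τ • w := by
      intro z hz
      rw [segment_eq_image'] at hz
      obtain ⟨θ, hθ, rfl⟩ := hz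
      refine ⟨θ * t, ⟨by nlinarith [ht.1, hθ.1], by nlinarith [ht.1, hθ.1, hθ.2]⟩, ?_⟩
      simp only [add_sub_cancel_left, smul_smul]
    have hts₁ : Icc (0:ℝ) t ⊆ Icc 0 s₁ := Icc_subset_Icc le_rfl (ht.2.trans hs.2)
    have hbound : ∀ z ∈ segment ℝ x (x + t • w),
        ‖fderiv ℝ (gradient U) z‖ ≤ C * (3/2 * g0) ^ 2 := by
      intro z hz
      obtain ⟨τ, hτ, rfl⟩ := hmemseg z hz
      refine (hhess _ (hseg τ (hts₁ hτ))).trans ?_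
      have h1 : ‖gradient U (x + τ • w)‖ ≤ 3/2 * g0 := by
        have h2 := hcrude τ (Icc_subset_Icc le_rfl ht.2 hτ)
        have h3 := norm_sub_norm_le (gradient U (x + τ • w)) (gradient U x)
        rw [hFdef] at h2
        simp only at h2
        linarith [h3.trans h2]
      have := pow_le_pow_left₀ (norm_nonneg _) h1 2
      nlinarith
    have hdiff : ∀ z ∈ segment ℝ x (x + t • w), DifferentiableAt ℝ (gradient U) z :=
      fun z _ => ((aux_grad_contDiff U hU).differentiable one_ne_zero) z
    have := Convex.norm_image_sub_le_of_norm_fderiv_le hdiff hbound (convex_segment _ _)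
      (left_mem_segment ℝ x (x + t • w)) (right_mem_segment ℝ x (x + t • w))
    rw [add_sub_cancel_left, norm_smul, Real.norm_eq_abs, abs_of_nonneg ht.1, hwn] at this
    rw [hFdef]
    simp only
    refine this.trans ?_
    have heq : C * (3/2 * g0) ^ 2 * (t * (8 * C * g0)⁻¹) = 9/32 * g0 * t := by
      field_simp
      ring
    rw [heq]
  -- sSup argument: crude bound holds on all of [0, s₁]
  have hcrude_all : ∀ t ∈ Icc (0:ℝ) s₁, F t ≤ g0 / 2 := by
    set S : Set ℝ := {s | s ∈ Icc (0:ℝ) s₁ ∧ ∀ t ∈ Icc (0:ℝ) s, F t ≤ g0 / 2} with hSdef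
    have h0S : 0 ∈ S := by
      refine ⟨⟨le_rfl, hs₁.1⟩, fun t ht => ?_⟩
      have : t = 0 := le_antisymm ht.2 ht.1
      subst this
      rw [hFdef]
      simp only [zero_smul, add_zero, sub_self, norm_zero]
      positivity
    have hbddS : BddAbove S := ⟨s₁, fun s hs => hs.1.2⟩
    set s₀ := sSup S with hs₀def
    have hs₀0 : 0 ≤ s₀ := le_csSup hbddS h0S
    have hs₀1 : s₀ ≤ s₁ := csSup_le ⟨0, h0S⟩ fun s hs => hs.1.2
    have hlt : ∀ t, 0 ≤ t → t < s₀ → F t ≤ g0 / 2 := by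
      intro t ht0 hts₀
      obtain ⟨s, hsS, hts⟩ := exists_lt_of_lt_csSup ⟨0, h0S⟩ hts₀
      exact hsS.2 t ⟨ht0, hts.le⟩
    have hFs₀ : F s₀ ≤ g0 / 2 := by
      rcases eq_or_lt_of_le hs₀0 with heq | hpos
      · have := h0S.2 0 ⟨le_rfl, le_rfl⟩
        rwa [← heq]
      · refine le_of_tendsto (hFcont.continuousAt.mono_left
          (nhdsWithin_le_nhds : nhdsWithin s₀ (Iio s₀) ≤ nhds s₀)) ?_
        filter_upwards [Ioo_mem_nhdsLT_of_mem (⟨hpos, le_rfl⟩ : s₀ ∈ Ioc 0 s₀)] with t ht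
        exact hlt t ht.1.le ht.2
    have hs₀S : s₀ ∈ S := by
      refine ⟨⟨hs₀0, hs₀1⟩, fun t ht => ?_⟩
      rcases lt_or_eq_of_le ht.2 with h | h
      · exact hlt t ht.1 h
      · rw [h]; exact hFs₀
    have hs₀s₁ : s₀ = s₁ := by
      by_contra hne
      have hlt₁ : s₀ < s₁ := lt_of_le_of_ne hs₀1 hne
      have href := hMVT s₀ ⟨hs₀0, hs₀1⟩ hs₀S.2
      have hFs₀' : F s₀ < g0 / 2 := by
        calc F s₀ ≤ 9/32 * g0 * s₀ := href s₀ ⟨hs₀0, le_rfl⟩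
        _ ≤ 9/32 * g0 * 1 := by nlinarith [hs₀1.trans hs₁.2]
        _ < g0 / 2 := by nlinarith
      have hev : ∀ᶠ t in nhds s₀, F t < g0 / 2 :=
        (hFcont.continuousAt).eventually_lt_const hFs₀'
      rw [Metric.eventually_nhds_iff] at hev
      obtain ⟨δ, hδ, hball⟩ := hev
      have hs'S : min s₁ (s₀ + δ/2) ∈ S := by
        refine ⟨⟨le_min hs₁.1 (by linarith), min_le_left _ _⟩, fun t ht => ?_⟩
        by_cases hts₀ : t ≤ s₀
        · exact hs₀S.2 t ⟨ht.1, hts₀⟩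
        · push_neg at hts₀
          refine (hball ?_).le
          rw [Real.dist_eq, abs_of_pos (by linarith)]
          have := ht.2.trans (min_le_right s₁ (s₀ + δ/2))
          linarith
      have h1 : min s₁ (s₀ + δ/2) ≤ s₀ := le_csSup hbddS hs'S
      have h2 : s₀ < min s₁ (s₀ + δ/2) := lt_min hlt₁ (by linarith)
      linarith
    exact hs₀s₁ ▸ hs₀S.2
  exact hMVT s₁ ⟨hs₁.1, le_rfl⟩ hcrude_all

lemma aux_seg_est (U : E → ℝ) (hU : ContDiff ℝ 2 U) (C R : ℝ) (hC : 0 < C)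
    (hhess : ∀ z : E, R ≤ ‖z‖ → ‖fderiv ℝ (gradient U) z‖ ≤ C * ‖gradient U z‖ ^ 2)
    (x : E) (hx : gradient U x ≠ 0) (w : E)
    (hw : w = -(8 * C * ‖gradient U x‖ ^ 2)⁻¹ • gradient U x)
    (s₁ : ℝ) (hs₁ : s₁ ∈ Icc (0:ℝ) 1)
    (hseg : ∀ t ∈ Icc (0:ℝ) s₁, R ≤ ‖x + t • w‖) :
    U (x + s₁ • w) ≤ U x - s₁ / (16 * C) ∧
    ‖gradient U x‖ ≤ ‖gradient U (x + s₁ • w)‖ *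
      Real.exp (16 * C * (U x - U (x + s₁ • w))) := by
  set g0 := ‖gradient U x‖ with hg0def
  have hg0 : 0 < g0 := norm_pos_iff.mpr hx
  have hwn : ‖w‖ = (8 * C * g0)⁻¹ := by
    rw [hw, norm_smul, norm_neg, norm_inv, Real.norm_eq_abs, abs_of_pos (by positivity)]
    rw [← hg0def]
    field_simp
  have hboot := aux_bootstrap U hU C R hC hhess x hx w hw s₁ hs₁ hseg
  have hinner_x : ⟪gradient U x, w⟫_ℝ = -(8 * C)⁻¹ := by
    rw [hw, real_inner_smul_right, real_inner_self_eq_norm_sq, ← hg0def]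
    field_simp
  -- derivative bound for φ(t) = U(x + t w) + t/(16 C)
  have hder : ∀ t : ℝ, HasDerivAt (fun t : ℝ => U (x + t • w) + t / (16 * C))
      (⟪gradient U (x + t • w), w⟫_ℝ + 1 / (16 * C)) t := by
    intro t
    exact (aux_hasDerivAt_U U hU x w t).add ((hasDerivAt_id t).div_const (16 * C))
  have hdbound : ∀ t ∈ Icc (0:ℝ) s₁, ⟪gradient U (x + t • w), w⟫_ℝ + 1 / (16 * C) ≤ 0 := by
    intro t ht
    have hsplit : ⟪gradient U (x + t • w), w⟫_ℝ
        = ⟪gradient U x, w⟫_ℝ + ⟪gradient U (x + t • w) - gradient U x, w⟫_ℝ := by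
      rw [inner_sub_left]; ring
    have habs : |⟪gradient U (x + t • w) - gradient U x, w⟫_ℝ| ≤ (16 * C)⁻¹ := by
      refine (abs_real_inner_le_norm _ _).trans ?_
      have h1 : ‖gradient U (x + t • w) - gradient U x‖ ≤ g0 / 2 := by
        refine (hboot t ht).trans ?_
        nlinarith [ht.1, ht.2.trans hs₁.2]
      calc ‖gradient U (x + t • w) - gradient U x‖ * ‖w‖
          ≤ (g0 / 2) * (8 * C * g0)⁻¹ := by
            rw [hwn]; exact mul_le_mul_of_nonneg_right h1 (by positivity)
        _ = (16 * C)⁻¹ := by field_simp; ring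
    have := abs_le.mp habs
    rw [hsplit, hinner_x]
    have h8 : (0:ℝ) < (8 * C)⁻¹ := by positivity
    have heq : (8 * C)⁻¹ = 2 * (16 * C)⁻¹ := by field_simp; ring
    rw [one_div]
    linarith [this.2, heq ▸ le_refl ((8:ℝ) * C)⁻¹]
  have hanti : AntitoneOn (fun t : ℝ => U (x + t • w) + t / (16 * C)) (Icc 0 s₁) := by
    apply antitoneOn_of_deriv_nonpos (convex_Icc 0 s₁)
    · exact fun t _ => ((hder t).continuousAt).continuousWithinAt
    · exact fun t _ => ((hder t).differentiableAt).differentiableWithinAt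
    · intro t ht
      rw [interior_Icc] at ht
      rw [(hder t).deriv]
      exact hdbound t ⟨ht.1.le, ht.2.le⟩
  have hUdec : U (x + s₁ • w) ≤ U x - s₁ / (16 * C) := by
    have := hanti ⟨le_rfl, hs₁.1⟩ ⟨hs₁.1, le_rfl⟩ hs₁.1
    simp only [zero_smul, add_zero, zero_div] at this
    linarith
  refine ⟨hUdec, ?_⟩
  -- lower bound on gradient at endpoint
  have hglow : g0 - 9/32 * g0 * s₁ ≤ ‖gradient U (x + s₁ • w)‖ := by
    have h1 := hboot s₁ ⟨hs₁.1, le_rfl⟩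
    have h2 := norm_sub_norm_le (gradient U x) (gradient U (x + s₁ • w))
    rw [norm_sub_rev] at h2
    linarith [h2.trans h1]
  have hexp : 1 + s₁ ≤ Real.exp (16 * C * (U x - U (x + s₁ • w))) := by
    have h1 : s₁ ≤ 16 * C * (U x - U (x + s₁ • w)) := by
      have : s₁ / (16 * C) ≤ U x - U (x + s₁ • w) := by linarith
      calc s₁ = 16 * C * (s₁ / (16 * C)) := by field_simp
        _ ≤ 16 * C * (U x - U (x + s₁ • w)) := by nlinarith
    calc 1 + s₁ ≤ Real.exp s₁ := by linarith [Real.add_one_le_exp s₁]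
      _ ≤ _ := Real.exp_le_exp.mpr h1
  have hprod : (g0 - 9/32 * g0 * s₁) * (1 + s₁)
      ≤ ‖gradient U (x + s₁ • w)‖ * Real.exp (16 * C * (U x - U (x + s₁ • w))) := by
    apply mul_le_mul hglow hexp (by nlinarith [hs₁.1]) (norm_nonneg _)
  refine le_trans ?_ hprod
  nlinarith [hs₁.1, hs₁.2, hg0.le, mul_nonneg (mul_nonneg hg0.le hs₁.1) hs₁.1]

lemma aux_grad_exp_bound (U : E → ℝ) (hU : ContDiff ℝ 2 U) (C R M m : ℝ) (hC : 0 < C)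
    (hhess : ∀ z : E, R ≤ ‖z‖ → ‖fderiv ℝ (gradient U) z‖ ≤ C * ‖gradient U z‖ ^ 2)
    (hcritR : ∀ z : E, R ≤ ‖z‖ → gradient U z ≠ 0)
    (hM : ∀ z : E, ‖z‖ ≤ R → ‖gradient U z‖ ≤ M)
    (hm : ∀ z, m ≤ U z) (hR : 0 ≤ R) :
    ∀ x, ‖gradient U x‖ ≤ M * Real.exp (16 * C * (U x - m)) := by
  have hM0 : 0 ≤ M := le_trans (norm_nonneg _) (hM 0 (by simpa using hR))
  have hgc : Continuous (gradient U) := (aux_grad_contDiff U hU).continuous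
  have key : ∀ n : ℕ, ∀ x : E, R ≤ ‖x‖ → U x ≤ m + n / (16 * C) →
      ‖gradient U x‖ ≤ M * Real.exp (16 * C * (U x - m)) := by
    intro n
    induction n with
    | zero =>
      intro x hxR hUx
      simp only [Nat.cast_zero, zero_div, add_zero] at hUx
      have hmin : IsLocalMin U x := by
        have : IsMinOn U univ x := by
          intro y _
          exact (hUx.trans (hm y) : U x ≤ U y)
        exact this.isLocalMin (by simp [Filter.univ_mem])
      have : fderiv ℝ U x = 0 := hmin.fderiv_eq_zero
      have hg0 : gradient U x = 0 := by rw [gradient, this, map_zero]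
      exact absurd hg0 (hcritR x hxR)
    | succ n ih =>
      intro x hxR hUx
      have hx : gradient U x ≠ 0 := hcritR x hxR
      set g0 := ‖gradient U x‖ with hg0def
      have hg0 : 0 < g0 := norm_pos_iff.mpr hx
      set w : E := -(8 * C * g0 ^ 2)⁻¹ • gradient U x with hwdef
      have hcont : Continuous fun t : ℝ => ‖x + t • w‖ :=
        (continuous_const.add (continuous_id.smul continuous_const)).norm
      by_cases hA : ∃ s ∈ Icc (0:ℝ) 1, ‖x + s • w‖ ≤ R
      · -- hits the ball: stop at first hitting time
        set T : Set ℝ := {s | s ∈ Icc (0:ℝ) 1 ∧ ‖x + s • w‖ ≤ R} with hTdef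
        have hTclosed : IsClosed T := by
          apply IsClosed.inter isClosed_Icc
          exact isClosed_le hcont continuous_const
        have hTne : T.Nonempty := by
          obtain ⟨s, hs1, hs2⟩ := hA; exact ⟨s, hs1, hs2⟩
        have hTbdd : BddBelow T := ⟨0, fun s hs => hs.1.1⟩
        set s₀ := sInf T with hs₀def
        have hs₀T : s₀ ∈ T := hTclosed.csInf_mem hTne hTbdd
        have hs₀Icc : s₀ ∈ Icc (0:ℝ) 1 := hs₀T.1
        have hbefore : ∀ t, 0 ≤ t → t < s₀ → R < ‖x + t • w‖ := by
          intro t ht0 hts₀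
          by_contra hle
          push_neg at hle
          have : t ∈ T := ⟨⟨ht0, hts₀.le.trans hs₀Icc.2⟩, hle⟩
          exact absurd (csInf_le hTbdd this) (not_le.mpr hts₀)
        have hs₀norm : R ≤ ‖x + s₀ • w‖ := by
          rcases eq_or_lt_of_le hs₀Icc.1 with h0 | h0
          · rw [← h0]; simpa using hxR
          · refine ge_of_tendsto (hcont.continuousAt.mono_left
                (nhdsWithin_le_nhds : nhdsWithin s₀ (Iio s₀) ≤ nhds s₀)) ?_
            filter_upwards [Ioo_mem_nhdsLT_of_mem (⟨h0, le_rfl⟩ : s₀ ∈ Ioc 0 s₀)] with u hu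
            exact (hbefore u hu.1.le hu.2).le
        have hseg : ∀ t ∈ Icc (0:ℝ) s₀, R ≤ ‖x + t • w‖ := by
          intro t ht
          rcases lt_or_eq_of_le ht.2 with h | h
          · exact (hbefore t ht.1 h).le
          · rw [h]; exact hs₀norm
        obtain ⟨hU1, hg1⟩ := aux_seg_est U hU C R hC hhess x hx w hwdef s₀ hs₀Icc hseg
        have hMs₀ : ‖gradient U (x + s₀ • w)‖ ≤ M := hM _ hs₀T.2
        calc ‖gradient U x‖ ≤ ‖gradient U (x + s₀ • w)‖ *
              Real.exp (16 * C * (U x - U (x + s₀ • w))) := hg1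
          _ ≤ M * Real.exp (16 * C * (U x - U (x + s₀ • w))) :=
              mul_le_mul_of_nonneg_right hMs₀ (Real.exp_nonneg _)
          _ ≤ M * Real.exp (16 * C * (U x - m)) := by
              apply mul_le_mul_of_nonneg_left _ hM0
              apply Real.exp_le_exp.mpr
              nlinarith [hm (x + s₀ • w)]
      · -- full step
        push_neg at hA
        have hseg : ∀ t ∈ Icc (0:ℝ) 1, R ≤ ‖x + t • w‖ := fun t ht => (hA t ht).le
        obtain ⟨hU1, hg1⟩ := aux_seg_est U hU C R hC hhess x hx w hwdef 1
          ⟨zero_le_one, le_rfl⟩ hseg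
        set y := x + (1:ℝ) • w with hydef
        have hyR : R ≤ ‖y‖ := hseg 1 ⟨zero_le_one, le_rfl⟩
        have hUy : U y ≤ m + n / (16 * C) := by
          have : U y ≤ U x - 1 / (16 * C) := hU1
          have h2 : ((n:ℝ) + 1) / (16 * C) - 1 / (16 * C) = n / (16 * C) := by
            field_simp
            ring
          push_cast at hUx ⊢
          linarith [hUx, h2]
        have hIH := ih y hyR hUy
        calc ‖gradient U x‖ ≤ ‖gradient U y‖ * Real.exp (16 * C * (U x - U y)) := hg1
          _ ≤ (M * Real.exp (16 * C * (U y - m))) * Real.exp (16 * C * (U x - U y)) :=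
              mul_le_mul_of_nonneg_right hIH (Real.exp_nonneg _)
          _ = M * Real.exp (16 * C * (U x - m)) := by
              rw [mul_assoc, ← Real.exp_add]
              ring_nf
  intro x
  by_cases hxR : ‖x‖ ≤ R
  · calc ‖gradient U x‖ ≤ M := hM x hxR
      _ ≤ M * Real.exp (16 * C * (U x - m)) := by
        nlinarith [Real.one_le_exp (by nlinarith [hm x] : (0:ℝ) ≤ 16 * C * (U x - m))]
  · push_neg at hxR
    obtain ⟨n, hn⟩ := exists_nat_ge ((U x - m) * (16 * C))
    refine key n x hxR.le ?_
    rw [← sub_le_iff_le_add']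
    rw [le_div_iff₀ (by positivity)]
    linarith

lemma aux_trace_le {d : ℕ} (T : EuclideanSpace ℝ (Fin d) →L[ℝ] EuclideanSpace ℝ (Fin d)) :
    |LinearMap.trace ℝ (EuclideanSpace ℝ (Fin d)) T.toLinearMap| ≤ d * ‖T‖ := by
  classical
  set b := (EuclideanSpace.basisFun (Fin d) ℝ).toBasis with hb
  rw [LinearMap.trace_eq_matrix_trace ℝ b, Matrix.trace]
  have hentry : ∀ i : Fin d, |LinearMap.toMatrix b b T.toLinearMap i i| ≤ ‖T‖ := by
    intro i
    rw [LinearMap.toMatrix_apply]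
    have h1 : b.repr (T.toLinearMap (b i)) i
        = (EuclideanSpace.basisFun (Fin d) ℝ).repr (T (b i)) i := by
      rw [hb, OrthonormalBasis.coe_toBasis_repr_apply]
      rfl
    rw [h1, (EuclideanSpace.basisFun (Fin d) ℝ).repr_apply_apply]
    have h2 : ‖(EuclideanSpace.basisFun (Fin d) ℝ) i‖ = 1 :=
      (EuclideanSpace.basisFun (Fin d) ℝ).orthonormal.1 i
    calc |⟪(EuclideanSpace.basisFun (Fin d) ℝ) i, T (b i)⟫_ℝ|
        ≤ ‖(EuclideanSpace.basisFun (Fin d) ℝ) i‖ * ‖T (b i)‖ := abs_real_inner_le_norm _ _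
      _ ≤ 1 * (‖T‖ * ‖b i‖) := by
          rw [h2]; exact mul_le_mul_of_nonneg_left (T.le_opNorm _) zero_le_one
      _ = ‖T‖ := by
          have : ‖b i‖ = 1 := by rw [hb, OrthonormalBasis.coe_toBasis]; exact h2
          rw [this]; ring
  calc |∑ i, (LinearMap.toMatrix b b T.toLinearMap).diag i|
      ≤ ∑ i : Fin d, |LinearMap.toMatrix b b T.toLinearMap i i| := by
        apply Finset.abs_sum_le_sum_abs
    _ ≤ ∑ _i : Fin d, ‖T‖ := Finset.sum_le_sum fun i _ => hentry i
    _ = d * ‖T‖ := by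
        rw [Finset.sum_const, Finset.card_univ, Fintype.card_fin, nsmul_eq_mul]

/-- Under the tail estimate for the Gibbs weight, the Hessian bound
`‖∇²U‖ ≤ C|∇U|²` off a compact set, coercivity of `U`, and boundedness of the
critical set, the functions `|∇U|²` and `ΔU` belong to `L²(dπ_ε)` for small `ε`,
i.e. `|∇U|⁴ e^{-U/ε}` and `(ΔU)² e^{-U/ε}` are Lebesgue integrable. The Hessian is
`fderiv ℝ (gradient U)` and the Laplacian is its trace. -/
theorem stmt7 {d : ℕ}
    (U : EuclideanSpace ℝ (Fin d) → ℝ) (hU : ContDiff ℝ 2 U)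
    (htail : ∀ a : ℝ, ∃ C : ℝ, ∀ ε : ℝ, 0 < ε →
      (∫⁻ x in {x | a ≤ U x}, ENNReal.ofReal (Real.exp (-U x / ε))) ≤
        ENNReal.ofReal (C * Real.exp (-a / ε)))
    (hhess : ∃ C : ℝ, 0 < C ∧ ∃ K : Set (EuclideanSpace ℝ (Fin d)), IsCompact K ∧
      ∀ x ∉ K, ‖fderiv ℝ (gradient U) x‖ ≤ C * ‖gradient U x‖ ^ 2)
    (hinfty : Tendsto U (Filter.cocompact (EuclideanSpace ℝ (Fin d))) atTop)
    (hcrit : Bornology.IsBounded {x | gradient U x = 0}) :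
    ∃ ε₀ : ℝ, 0 < ε₀ ∧ ∀ ε : ℝ, 0 < ε → ε < ε₀ →
      Integrable (fun x => ‖gradient U x‖ ^ 4 * Real.exp (-U x / ε)) ∧
      Integrable (fun x =>
        (LinearMap.trace ℝ (EuclideanSpace ℝ (Fin d))
            (fderiv ℝ (gradient U) x).toLinearMap) ^ 2 * Real.exp (-U x / ε)) := by
  classical
  obtain ⟨C, hC, K, hK, hhessK⟩ := hhess
  obtain ⟨r₁, hr₁⟩ := hK.isBounded.subset_closedBall 0
  obtain ⟨r₂, hr₂⟩ := hcrit.subset_closedBall 0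
  set R : ℝ := max (max r₁ r₂) 0 + 1 with hRdef
  have hR0 : 0 ≤ R := by
    have : (0:ℝ) ≤ max (max r₁ r₂) 0 := le_max_right _ _
    linarith
  have hhessR : ∀ z, R ≤ ‖z‖ → ‖fderiv ℝ (gradient U) z‖ ≤ C * ‖gradient U z‖ ^ 2 := by
    intro z hz
    refine hhessK z fun hzK => ?_
    have h1 := hr₁ hzK
    rw [Metric.mem_closedBall, dist_zero_right] at h1
    have h2 : r₁ ≤ max (max r₁ r₂) 0 := (le_max_left _ _).trans (le_max_left _ _)
    linarith
  have hcritR : ∀ z, R ≤ ‖z‖ → gradient U z ≠ 0 := by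
    intro z hz h0
    have h1 := hr₂ (show z ∈ {x | gradient U x = 0} from h0)
    rw [Metric.mem_closedBall, dist_zero_right] at h1
    have h2 : r₂ ≤ max (max r₁ r₂) 0 := (le_max_right _ _).trans (le_max_left _ _)
    linarith
  -- global lower bound for U
  obtain ⟨K₀, hK₀c, hK₀⟩ : ∃ K₀ : Set (EuclideanSpace ℝ (Fin d)),
      IsCompact K₀ ∧ ∀ x ∉ K₀, 0 ≤ U x := by
    have h := hinfty.eventually (eventually_ge_atTop (0:ℝ))
    rw [Filter.hasBasis_cocompact.eventually_iff] at h
    obtain ⟨K₀, h1, h2⟩ := h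
    exact ⟨K₀, h1, fun x hx => h2 hx⟩
  obtain ⟨x₀, hx₀mem, hx₀min⟩ := (hK₀c.insert 0).exists_isMinOn (insert_nonempty _ _)
    hU.continuous.continuousOn
  set m : ℝ := min (U x₀) 0 with hmdef
  have hm : ∀ z, m ≤ U z := by
    intro z
    by_cases hz : z ∈ insert (0 : EuclideanSpace ℝ (Fin d)) K₀
    · exact (min_le_left _ _).trans (hx₀min hz)
    · exact (min_le_right _ _).trans (hK₀ z fun h => hz (mem_insert_of_mem _ h))
  -- sup of gradient and Hessian norms on the ball
  have hgc : Continuous (gradient U) := (aux_grad_contDiff U hU).continuous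
  have hHc : Continuous (fun x => fderiv ℝ (gradient U) x) :=
    (aux_grad_contDiff U hU).continuous_fderiv one_ne_zero
  have hball : IsCompact (Metric.closedBall (0 : EuclideanSpace ℝ (Fin d)) R) :=
    isCompact_closedBall _ _
  have hballne : (Metric.closedBall (0 : EuclideanSpace ℝ (Fin d)) R).Nonempty :=
    ⟨0, Metric.mem_closedBall_self hR0⟩
  obtain ⟨x₁, _, hx₁⟩ := hball.exists_isMaxOn hballne hgc.norm.continuousOn
  set M : ℝ := ‖gradient U x₁‖ with hMdef
  have hM : ∀ z, ‖z‖ ≤ R → ‖gradient U z‖ ≤ M := by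
    intro z hz
    exact hx₁ (by rwa [Metric.mem_closedBall, dist_zero_right])
  obtain ⟨x₂, _, hx₂⟩ := hball.exists_isMaxOn hballne hHc.norm.continuousOn
  set M₂ : ℝ := ‖fderiv ℝ (gradient U) x₂‖ with hM₂def
  have hM₂ : ∀ z, ‖z‖ ≤ R → ‖fderiv ℝ (gradient U) z‖ ≤ M₂ := by
    intro z hz
    exact hx₂ (by rwa [Metric.mem_closedBall, dist_zero_right])
  have hgb := aux_grad_exp_bound U hU C R M m hC hhessR hcritR hM hm hR0
  have hM0 : 0 ≤ M := norm_nonneg _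
  have hM₂0 : 0 ≤ M₂ := norm_nonneg _
  -- integrability of the Gibbs weight at every temperature
  have hexp_int : ∀ ε' : ℝ, 0 < ε' →
      Integrable (fun x : EuclideanSpace ℝ (Fin d) => Real.exp (-U x / ε')) := by
    intro ε' hε'
    obtain ⟨C₁, hC₁⟩ := htail m
    have huniv : {x : EuclideanSpace ℝ (Fin d) | m ≤ U x} = Set.univ :=
      Set.eq_univ_of_forall hm
    have h2 := hC₁ ε' hε'
    rw [huniv, Measure.restrict_univ] at h2
    have hcontexp : Continuous (fun x : EuclideanSpace ℝ (Fin d) => Real.exp (-U x / ε')) :=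
      Real.continuous_exp.comp ((hU.continuous.neg).div_const ε')
    refine ⟨hcontexp.aestronglyMeasurable, ?_⟩
    rw [hasFiniteIntegral_iff_norm]
    calc ∫⁻ x, ENNReal.ofReal ‖Real.exp (-U x / ε')‖
        = ∫⁻ x, ENNReal.ofReal (Real.exp (-U x / ε')) := by
          apply lintegral_congr
          intro x
          rw [Real.norm_eq_abs, abs_of_pos (Real.exp_pos _)]
      _ ≤ ENNReal.ofReal (C₁ * Real.exp (-m / ε')) := h2
      _ < ⊤ := ENNReal.ofReal_lt_top
  set B : ℝ := 64 * C with hBdef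
  refine ⟨(B + 1)⁻¹, by positivity, ?_⟩
  intro ε hε hεB
  have hβ : 0 < ε⁻¹ - B := by
    have h1 : ((B + 1)⁻¹)⁻¹ < ε⁻¹ := by
      apply inv_strictAnti₀ hε hεB
    rw [inv_inv] at h1
    linarith
  set ε' : ℝ := (ε⁻¹ - B)⁻¹ with hε'def
  have hε'pos : 0 < ε' := by positivity
  -- pointwise bound on |∇U|⁴ e^{-U/ε}
  have hpt : ∀ x, ‖gradient U x‖ ^ 4 * Real.exp (-U x / ε)
      ≤ (M ^ 4 * Real.exp (-B * m)) * Real.exp (-U x / ε') := by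
    intro x
    have h1 : ‖gradient U x‖ ^ 4 ≤ (M * Real.exp (16 * C * (U x - m))) ^ 4 :=
      pow_le_pow_left₀ (norm_nonneg _) (hgb x) 4
    have h2 : (M * Real.exp (16 * C * (U x - m))) ^ 4
        = M ^ 4 * Real.exp (B * (U x - m)) := by
      have h4 : B * (U x - m) = (4:ℕ) * (16 * C * (U x - m)) := by
        push_cast
        rw [hBdef]
        ring
      rw [mul_pow, h4, Real.exp_nat_mul]
    have h3 : Real.exp (B * (U x - m)) * Real.exp (-U x / ε)
        = Real.exp (-B * m) * Real.exp (-U x / ε') := by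
      rw [← Real.exp_add, ← Real.exp_add]
      congr 1
      simp only [hε'def, div_eq_mul_inv, inv_inv]
      ring
    calc ‖gradient U x‖ ^ 4 * Real.exp (-U x / ε)
        ≤ M ^ 4 * Real.exp (B * (U x - m)) * Real.exp (-U x / ε) := by
          rw [← h2]
          exact mul_le_mul_of_nonneg_right h1 (Real.exp_nonneg _)
      _ = (M ^ 4 * Real.exp (-B * m)) * Real.exp (-U x / ε') := by
          rw [mul_assoc, h3]; ring
  have hcont1 : Continuous (fun x : EuclideanSpace ℝ (Fin d) =>
      ‖gradient U x‖ ^ 4 * Real.exp (-U x / ε)) :=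
    ((hgc.norm.pow 4).mul (Real.continuous_exp.comp ((hU.continuous.neg).div_const ε)))
  have hint1 : Integrable (fun x : EuclideanSpace ℝ (Fin d) =>
      ‖gradient U x‖ ^ 4 * Real.exp (-U x / ε)) := by
    refine Integrable.mono' (((hexp_int ε' hε'pos).const_mul (M ^ 4 * Real.exp (-B * m))))
      hcont1.aestronglyMeasurable ?_
    filter_upwards with x
    rw [Real.norm_eq_abs, abs_of_nonneg (by positivity)]
    exact hpt x
  refine ⟨hint1, ?_⟩
  -- the trace part
  set tr : EuclideanSpace ℝ (Fin d) → ℝ := fun x =>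
    LinearMap.trace ℝ (EuclideanSpace ℝ (Fin d)) (fderiv ℝ (gradient U) x).toLinearMap
    with htrdef
  have htrcont : Continuous tr := by
    have hL : Continuous (fun T : EuclideanSpace ℝ (Fin d) →L[ℝ] EuclideanSpace ℝ (Fin d) =>
        LinearMap.trace ℝ (EuclideanSpace ℝ (Fin d)) T.toLinearMap) := by
      exact LinearMap.continuous_of_finiteDimensional
        ((LinearMap.trace ℝ (EuclideanSpace ℝ (Fin d))).comp (ContinuousLinearMap.coeLM ℝ))
    exact hL.comp hHc
  have htrb : ∀ x, |tr x| ≤ d * (M₂ + C * ‖gradient U x‖ ^ 2) := by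
    intro x
    refine (aux_trace_le _).trans ?_
    have hH : ‖fderiv ℝ (gradient U) x‖ ≤ M₂ + C * ‖gradient U x‖ ^ 2 := by
      by_cases hx : ‖x‖ ≤ R
      · have := hM₂ x hx
        nlinarith [sq_nonneg ‖gradient U x‖, hC.le, norm_nonneg (gradient U x)]
      · push_neg at hx
        have := hhessR x hx.le
        linarith
    exact mul_le_mul_of_nonneg_left hH (by positivity)
  have hpt2 : ∀ x, tr x ^ 2 * Real.exp (-U x / ε)
      ≤ (2 * d ^ 2 * M₂ ^ 2) * Real.exp (-U x / ε)
        + (2 * d ^ 2 * C ^ 2) * (‖gradient U x‖ ^ 4 * Real.exp (-U x / ε)) := by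
    intro x
    have h1 : tr x ^ 2 ≤ 2 * d ^ 2 * M₂ ^ 2 + 2 * d ^ 2 * C ^ 2 * ‖gradient U x‖ ^ 4 := by
      have h2 := htrb x
      have h3 : tr x ^ 2 ≤ (d * (M₂ + C * ‖gradient U x‖ ^ 2)) ^ 2 := by
        rw [← sq_abs]
        exact pow_le_pow_left₀ (abs_nonneg _) h2 2
      nlinarith [sq_nonneg ((M₂ : ℝ) - C * ‖gradient U x‖ ^ 2), sq_nonneg (d : ℝ),
        sq_nonneg (M₂ + C * ‖gradient U x‖ ^ 2)]
    nlinarith [Real.exp_nonneg (-U x / ε), h1]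
  have hint2bound : Integrable (fun x : EuclideanSpace ℝ (Fin d) =>
      (2 * d ^ 2 * M₂ ^ 2) * Real.exp (-U x / ε)
        + (2 * d ^ 2 * C ^ 2) * (‖gradient U x‖ ^ 4 * Real.exp (-U x / ε))) :=
    ((hexp_int ε hε).const_mul _).add (hint1.const_mul _)
  refine Integrable.mono' hint2bound
    ((((htrcont.pow 2).mul (Real.continuous_exp.comp
      ((hU.continuous.neg).div_const ε)))).aestronglyMeasurable) ?_
  filter_upwards with x
  rw [Real.norm_eq_abs, abs_of_nonneg (by positivity)]
  exact hpt2 x
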